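/- Let E be a separable real Banach space, μ a Borel probability measure on E, z ∈ E, p ∈ (1,∞) with conjugate exponent p′ = p/(p−1), and let w ∈ L^{p′}(E,μ) be an integration-by-parts weight for (μ,z). If (φ_n) ⊆ C¹_b(E) satisfies φ_n → 0 in L^p(E,μ) and the functions x ↦ Dφ_n(x)(z) converge in L^p(E,μ) to some F, then F = 0 μ-almost everywhere. (Hence the directional derivative operator φ ↦ Dφ(·)(z) with domain C¹_b(E) is closable in L^p(E,μ).) -/

import Mathlib

open MeasureTheory Filter

noncomputable section
set_option linter.unusedSectionVars false

/-- `φ ∈ C¹_b(X)`: `φ` is continuously Fréchet differentiable, bounded, with bounded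
derivative. -/
def IsC1b {X : Type*} [NormedAddCommGroup X] [NormedSpace ℝ X] (φ : X → ℝ) : Prop :=
  ContDiff ℝ 1 φ ∧ (∃ C, ∀ x, |φ x| ≤ C) ∧ (∃ C, ∀ x, ‖fderiv ℝ φ x‖ ≤ C)

namespace ClosAux

variable {E : Type*} [NormedAddCommGroup E] [NormedSpace ℝ E]

lemma isC1b_one : IsC1b (fun _ : E => (1 : ℝ)) := by
  refine ⟨contDiff_const, ⟨1, fun x => by simp⟩, ⟨0, fun x => by simp [fderiv_const]⟩⟩

lemma IsC1b.mul {φ ψ : E → ℝ} (hφ : IsC1b φ) (hψ : IsC1b ψ) :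
    IsC1b (fun x => φ x * ψ x) := by
  obtain ⟨hφ1, ⟨Cφ, hCφ⟩, ⟨Dφ, hDφ⟩⟩ := hφ
  obtain ⟨hψ1, ⟨Cψ, hCψ⟩, ⟨Dψ, hDψ⟩⟩ := hψ
  have hCφ0 : 0 ≤ Cφ := (abs_nonneg _).trans (hCφ 0)
  have hCψ0 : 0 ≤ Cψ := (abs_nonneg _).trans (hCψ 0)
  refine ⟨hφ1.mul hψ1, ⟨Cφ * Cψ, fun x => ?_⟩, ⟨Cφ * Dψ + Cψ * Dφ, fun x => ?_⟩⟩
  · rw [abs_mul]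
    exact mul_le_mul (hCφ x) (hCψ x) (abs_nonneg _) hCφ0
  · rw [fderiv_fun_mul (hφ1.differentiable one_ne_zero x) (hψ1.differentiable one_ne_zero x)]
    refine (norm_add_le _ _).trans ?_
    rw [norm_smul, norm_smul, Real.norm_eq_abs, Real.norm_eq_abs]
    exact add_le_add (mul_le_mul (hCφ x) (hDψ x) (norm_nonneg _) hCφ0)
      (mul_le_mul (hCψ x) (hDφ x) (norm_nonneg _) hCψ0)

variable [MeasurableSpace E] [BorelSpace E]

lemma integrable_of_bdd_cont {μ : Measure E} [IsFiniteMeasure μ] {f : E → ℝ}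
    (hc : Continuous f) (C : ℝ) (hb : ∀ x, |f x| ≤ C) : Integrable f μ :=
  memLp_one_iff_integrable.mp
    (MemLp.of_bound hc.aestronglyMeasurable C (Filter.Eventually.of_forall hb))

lemma isC1b_memℒp {μ : Measure E} [IsFiniteMeasure μ] {f : E → ℝ} (hf : IsC1b f)
    (q : ENNReal) : MemLp f q μ := by
  obtain ⟨C, hC⟩ := hf.2.1
  exact MemLp.of_bound hf.1.continuous.aestronglyMeasurable C (Filter.Eventually.of_forall hC)

lemma isC1b_integrable {μ : Measure E} [IsFiniteMeasure μ] {f : E → ℝ} (hf : IsC1b f) :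
    Integrable f μ := memLp_one_iff_integrable.mp (isC1b_memℒp hf 1)

/-- The directional derivative of a `C¹_b` function, as a function of the point, is
continuous and bounded. -/
lemma isC1b_deriv_continuous {f : E → ℝ} (hf : IsC1b f) (z : E) :
    Continuous (fun x => fderiv ℝ f x z) :=
  (hf.1.continuous_fderiv one_ne_zero).clm_apply continuous_const

lemma isC1b_deriv_bound {f : E → ℝ} (hf : IsC1b f) (z : E) :
    ∃ C, ∀ x, |fderiv ℝ f x z| ≤ C := by
  obtain ⟨C, hC⟩ := hf.2.2
  refine ⟨C * ‖z‖, fun x => ?_⟩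
  calc |fderiv ℝ f x z| = ‖fderiv ℝ f x z‖ := rfl
    _ ≤ ‖fderiv ℝ f x‖ * ‖z‖ := (fderiv ℝ f x).le_opNorm z
    _ ≤ C * ‖z‖ := mul_le_mul_of_nonneg_right (hC x) (norm_nonneg z)

lemma isC1b_deriv_memℒp {μ : Measure E} [IsFiniteMeasure μ] {f : E → ℝ} (hf : IsC1b f)
    (z : E) (q : ENNReal) : MemLp (fun x => fderiv ℝ f x z) q μ := by
  obtain ⟨C, hC⟩ := isC1b_deriv_bound hf z
  exact MemLp.of_bound (isC1b_deriv_continuous hf z).aestronglyMeasurable C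
    (Filter.Eventually.of_forall hC)

lemma isC1b_deriv_integrable {μ : Measure E} [IsFiniteMeasure μ] {f : E → ℝ} (hf : IsC1b f)
    (z : E) : Integrable (fun x => fderiv ℝ f x z) μ :=
  memLp_one_iff_integrable.mp (isC1b_deriv_memℒp hf z 1)

/-- Lemma A: if `g n → 0` in `L^p` and `ψ` is bounded measurable, then `∫ g n * ψ → 0`. -/
lemma tendsto_integral_mul_of_eLpNorm_tendsto_zero
    {μ : Measure E} [IsProbabilityMeasure μ] {p : ℝ} (hp : 1 < p)
    {g : ℕ → E → ℝ} (hg : ∀ n, MemLp (g n) (ENNReal.ofReal p) μ)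
    (hg0 : Tendsto (fun n => eLpNorm (g n) (ENNReal.ofReal p) μ) atTop (nhds 0))
    {ψ : E → ℝ} (hψm : AEStronglyMeasurable ψ μ) {C : ℝ} (hψb : ∀ x, |ψ x| ≤ C) :
    Tendsto (fun n => ∫ x, g n x * ψ x ∂μ) atTop (nhds 0) := by
  have h1p : (1 : ENNReal) ≤ ENNReal.ofReal p := by
    rw [show (1 : ENNReal) = ENNReal.ofReal 1 by simp]
    exact ENNReal.ofReal_le_ofReal hp.le
  have hgi : ∀ n, Integrable (g n) μ :=
    fun n => memLp_one_iff_integrable.mp ((hg n).mono_exponent h1p)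
  have hC0 : 0 ≤ C := (abs_nonneg _).trans (hψb 0)
  have key : ∀ n, ‖∫ x, g n x * ψ x ∂μ‖ ≤
      C * (eLpNorm (g n) (ENNReal.ofReal p) μ).toReal := by
    intro n
    have hgψ : Integrable (fun x => g n x * ψ x) μ := by
      have := (hgi n).bdd_mul hψm (ae_of_all _ fun x => by simpa using hψb x)
      simpa [mul_comm] using this
    calc ‖∫ x, g n x * ψ x ∂μ‖ ≤ ∫ x, ‖g n x * ψ x‖ ∂μ := norm_integral_le_integral_norm _
      _ ≤ ∫ x, C * ‖g n x‖ ∂μ := by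
          refine integral_mono hgψ.norm ((hgi n).norm.const_mul C) (fun x => ?_)
          simp only [norm_mul, Real.norm_eq_abs]
          calc |g n x| * |ψ x| ≤ |g n x| * C := by gcongr; exact hψb x
            _ = C * |g n x| := mul_comm _ _
      _ = C * ∫ x, ‖g n x‖ ∂μ := integral_const_mul C _
      _ ≤ C * (eLpNorm (g n) (ENNReal.ofReal p) μ).toReal := by
          gcongr
          have h1 : ENNReal.ofReal (∫ x, ‖g n x‖ ∂μ) = eLpNorm (g n) 1 μ := by
            rw [eLpNorm_one_eq_lintegral_enorm]
            exact ofReal_integral_norm_eq_lintegral_enorm (hgi n)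
          have h2 : eLpNorm (g n) 1 μ ≤ eLpNorm (g n) (ENNReal.ofReal p) μ :=
            eLpNorm_le_eLpNorm_of_exponent_le h1p (hg n).1
          have h3 : (ENNReal.ofReal (∫ x, ‖g n x‖ ∂μ)).toReal ≤
              (eLpNorm (g n) (ENNReal.ofReal p) μ).toReal :=
            ENNReal.toReal_mono (hg n).eLpNorm_ne_top (h1.le.trans h2)
          rwa [ENNReal.toReal_ofReal (integral_nonneg (fun x => norm_nonneg _))] at h3
  refine squeeze_zero_norm key ?_
  have := ((ENNReal.tendsto_toReal (by simp)).comp hg0).const_mul C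
  simpa using this

/-- Lemma B: Hölder-type estimate: if `g n → 0` in `L^p`, `ψ` bounded measurable and
`w ∈ L^{p'}`, then `∫ g n * ψ * w → 0`. -/
lemma tendsto_integral_weight
    {μ : Measure E} [IsProbabilityMeasure μ] {p : ℝ} (hp : 1 < p)
    {w : E → ℝ} (hw : MemLp w (ENNReal.ofReal (p / (p - 1))) μ)
    {g : ℕ → E → ℝ} (hg : ∀ n, IsC1b (g n))
    (hg0 : Tendsto (fun n => eLpNorm (g n) (ENNReal.ofReal p) μ) atTop (nhds 0))
    {ψ : E → ℝ} (hψm : AEStronglyMeasurable ψ μ) {C : ℝ} (hψb : ∀ x, |ψ x| ≤ C) :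
    Tendsto (fun n => ∫ x, g n x * ψ x * w x ∂μ) atTop (nhds 0) := by
  set q : ℝ := p / (p - 1) with hq
  have hpq : p.HolderConjugate q := Real.HolderConjugate.conjExponent hp
  have hq1 : (1 : ENNReal) ≤ ENNReal.ofReal q := by
    rw [show (1 : ENNReal) = ENNReal.ofReal 1 by simp]
    exact ENNReal.ofReal_le_ofReal hpq.symm.lt.le
  have hwi : Integrable w μ := memLp_one_iff_integrable.mp (hw.mono_exponent hq1)
  have hC0 : 0 ≤ C := (abs_nonneg _).trans (hψb 0)
  set K : ℝ := (∫ x, ‖w x‖ ^ q ∂μ) ^ (1 / q) with hK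
  have hK0 : 0 ≤ K := Real.rpow_nonneg (integral_nonneg fun x => Real.rpow_nonneg (norm_nonneg _) _) _
  have key : ∀ n, ‖∫ x, g n x * ψ x * w x ∂μ‖ ≤
      C * K * (eLpNorm (g n) (ENNReal.ofReal p) μ).toReal := by
    intro n
    obtain ⟨Cg, hCg⟩ := (hg n).2.1
    have hgm : AEStronglyMeasurable (g n) μ := (hg n).1.continuous.aestronglyMeasurable
    have hgw : Integrable (fun x => g n x * w x) μ :=
      hwi.bdd_mul hgm (ae_of_all _ fun x => by simpa using hCg x)
    have hgψw : Integrable (fun x => g n x * ψ x * w x) μ := by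
      have := hwi.bdd_mul (hgm.mul hψm)
        (ae_of_all _ fun x => by
          simp only [Pi.mul_apply, Real.norm_eq_abs, abs_mul]
          exact mul_le_mul (hCg x) (hψb x) (abs_nonneg _) ((abs_nonneg _).trans (hCg 0)))
      simpa using this
    have hmemg : MemLp (g n) (ENNReal.ofReal p) μ := isC1b_memℒp (hg n) _
    have step : ∫ x, ‖g n x‖ * ‖w x‖ ∂μ ≤
        (∫ x, ‖g n x‖ ^ p ∂μ) ^ (1 / p) * K :=
      integral_mul_norm_le_Lp_mul_Lq hpq hmemg hw
    have heq : (∫ x, ‖g n x‖ ^ p ∂μ) ^ (1 / p) =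
        (eLpNorm (g n) (ENNReal.ofReal p) μ).toReal := by
      rw [hmemg.eLpNorm_eq_integral_rpow_norm (by simp [hpq.pos]) (by simp),
        ENNReal.toReal_ofReal (Real.rpow_nonneg
          (integral_nonneg fun x => Real.rpow_nonneg (norm_nonneg _) _) _),
        ENNReal.toReal_ofReal hpq.nonneg, one_div]
    calc ‖∫ x, g n x * ψ x * w x ∂μ‖ ≤ ∫ x, ‖g n x * ψ x * w x‖ ∂μ :=
        norm_integral_le_integral_norm _
      _ ≤ ∫ x, C * ‖g n x * w x‖ ∂μ := by
          refine integral_mono hgψw.norm (hgw.norm.const_mul C) (fun x => ?_)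
          simp only [Real.norm_eq_abs, abs_mul]
          calc |g n x| * |ψ x| * |w x| = |ψ x| * (|g n x| * |w x|) := by ring
            _ ≤ C * (|g n x| * |w x|) :=
              mul_le_mul_of_nonneg_right (hψb x) (by positivity)
      _ = C * ∫ x, ‖g n x * w x‖ ∂μ := integral_const_mul C _
      _ = C * ∫ x, ‖g n x‖ * ‖w x‖ ∂μ := by
          congr 1; exact integral_congr_ae (ae_of_all _ fun x => by simp [abs_mul])
      _ ≤ C * ((∫ x, ‖g n x‖ ^ p ∂μ) ^ (1 / p) * K) :=
          mul_le_mul_of_nonneg_left step hC0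
      _ = C * K * (eLpNorm (g n) (ENNReal.ofReal p) μ).toReal := by rw [heq]; ring
  refine squeeze_zero_norm key ?_
  have := ((ENNReal.tendsto_toReal (by simp)).comp hg0).const_mul (C * K)
  simpa using this

/-- Step 1: the integral of `ψ * F` vanishes for every `ψ ∈ C¹_b`. -/
lemma step1
    {μ : Measure E} [IsProbabilityMeasure μ] (z : E) {p : ℝ} (hp : 1 < p)
    {w : E → ℝ} (hw : MemLp w (ENNReal.ofReal (p / (p - 1))) μ)
    (hweight : ∀ φ : E → ℝ, IsC1b φ → ∫ x, fderiv ℝ φ x z ∂μ = ∫ x, φ x * w x ∂μ)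
    {φn : ℕ → E → ℝ} (hφn : ∀ n, IsC1b (φn n))
    (hφn0 : Tendsto (fun n => eLpNorm (φn n) (ENNReal.ofReal p) μ) atTop (nhds 0))
    {F : E → ℝ} (hF : MemLp F (ENNReal.ofReal p) μ)
    (hDconv : Tendsto
      (fun n => eLpNorm (fun x => fderiv ℝ (φn n) x z - F x) (ENNReal.ofReal p) μ)
      atTop (nhds 0))
    {ψ : E → ℝ} (hψ : IsC1b ψ) :
    ∫ x, ψ x * F x ∂μ = 0 := by
  have h1p : (1 : ENNReal) ≤ ENNReal.ofReal p := by
    rw [show (1 : ENNReal) = ENNReal.ofReal 1 by simp]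
    exact ENNReal.ofReal_le_ofReal hp.le
  have hFi : Integrable F μ := memLp_one_iff_integrable.mp (hF.mono_exponent h1p)
  obtain ⟨Cψ, hCψ⟩ := hψ.2.1
  have hψm : AEStronglyMeasurable ψ μ := hψ.1.continuous.aestronglyMeasurable
  have hψb' : ∃ C, ∀ x, ‖ψ x‖ ≤ C := ⟨Cψ, fun x => by simpa using hCψ x⟩
  set A : ℕ → ℝ := fun n => ∫ x, ψ x * fderiv ℝ (φn n) x z ∂μ with hA
  -- claim 1 : A → ∫ ψ F
  have claim1 : Tendsto A atTop (nhds (∫ x, ψ x * F x ∂μ)) := by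
    have hrep : ∀ n, A n = (∫ x, ψ x * F x ∂μ) +
        ∫ x, (fderiv ℝ (φn n) x z - F x) * ψ x ∂μ := by
      intro n
      have hint1 : Integrable (fun x => ψ x * F x) μ := hFi.bdd_mul hψm (ae_of_all _ hψb'.choose_spec)
      have hint2 : Integrable (fun x => (fderiv ℝ (φn n) x z - F x) * ψ x) μ := by
        have : Integrable (fun x => ψ x * (fderiv ℝ (φn n) x z - F x)) μ :=
          ((isC1b_deriv_integrable (hφn n) z).sub hFi).bdd_mul hψm (ae_of_all _ hψb'.choose_spec)
        simpa [mul_comm] using this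
      rw [hA, ← integral_add hint1 hint2]
      exact integral_congr_ae (ae_of_all _ fun x => by ring)
    rw [tendsto_congr hrep]
    have h2 : Tendsto
        (fun n => ∫ x, (fderiv ℝ (φn n) x z - F x) * ψ x ∂μ) atTop (nhds 0) := by
      refine tendsto_integral_mul_of_eLpNorm_tendsto_zero hp
        (fun n => ?_) ?_ hψm hCψ
      · exact ((isC1b_deriv_memℒp (hφn n) z _).sub hF)
      · exact hDconv
    simpa using tendsto_const_nhds.add h2
  -- claim 2 : A → 0
  have claim2 : Tendsto A atTop (nhds 0) := by
    have hrep : ∀ n, A n = (∫ x, φn n x * ψ x * w x ∂μ) -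
        ∫ x, φn n x * fderiv ℝ ψ x z ∂μ := by
      intro n
      have hprod : IsC1b (fun x => φn n x * ψ x) := IsC1b.mul (hφn n) hψ
      have hw' := hweight _ hprod
      have hfd : ∀ x, fderiv ℝ (fun y => φn n y * ψ y) x z
          = φn n x * fderiv ℝ ψ x z + ψ x * fderiv ℝ (φn n) x z := by
        intro x
        rw [fderiv_fun_mul (((hφn n).1.differentiable one_ne_zero) x) ((hψ.1.differentiable one_ne_zero) x)]
        simp
      have hint_a : Integrable (fun x => φn n x * fderiv ℝ ψ x z) μ := by
        obtain ⟨Ca, hCa⟩ := (hφn n).2.1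
        exact (isC1b_deriv_integrable hψ z).bdd_mul
          (hφn n).1.continuous.aestronglyMeasurable (ae_of_all _ fun x => by simpa using hCa x)
      have hint_b : Integrable (fun x => ψ x * fderiv ℝ (φn n) x z) μ :=
        (isC1b_deriv_integrable (hφn n) z).bdd_mul hψm (ae_of_all _ hψb'.choose_spec)
      rw [integral_congr_ae (ae_of_all _ hfd), integral_add hint_a hint_b] at hw'
      have hrhs : ∫ x, (fun y => φn n y * ψ y) x * w x ∂μ
          = ∫ x, φn n x * ψ x * w x ∂μ := rfl
      rw [hrhs] at hw'
      rw [hA]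
      linarith
    rw [tendsto_congr hrep]
    have h1 : Tendsto (fun n => ∫ x, φn n x * ψ x * w x ∂μ) atTop (nhds 0) :=
      tendsto_integral_weight hp hw hφn hφn0 hψm hCψ
    have h2 : Tendsto (fun n => ∫ x, φn n x * fderiv ℝ ψ x z ∂μ) atTop (nhds 0) := by
      obtain ⟨Cd, hCd⟩ := isC1b_deriv_bound hψ z
      exact tendsto_integral_mul_of_eLpNorm_tendsto_zero hp
        (fun n => isC1b_memℒp (hφn n) _) hφn0
        (isC1b_deriv_continuous hψ z).aestronglyMeasurable hCd
    simpa using h1.sub h2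
  exact tendsto_nhds_unique claim1 claim2
/-- A norming sequence of functionals on a separable normed space. -/
lemma exists_norming [TopologicalSpace.SeparableSpace E] :
    ∃ ℓ : ℕ → E →L[ℝ] ℝ, ∀ (y : E) (r : ℝ), ‖y‖ ≤ r ↔ ∀ i, ℓ i y ≤ r := by
  have : Nonempty E := ⟨0⟩
  set d := TopologicalSpace.denseSeq E with hd_def
  have hd : DenseRange d := TopologicalSpace.denseRange_denseSeq E
  choose ℓ hℓ1 hℓ2 using fun i => exists_dual_vector'' ℝ (d i)
  refine ⟨ℓ, fun y r => ⟨fun h i => ?_, fun h => ?_⟩⟩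
  · calc ℓ i y ≤ |ℓ i y| := le_abs_self _
      _ ≤ ‖ℓ i‖ * ‖y‖ := (ℓ i).le_opNorm y
      _ ≤ 1 * ‖y‖ := mul_le_mul_of_nonneg_right (hℓ1 i) (norm_nonneg _)
      _ = ‖y‖ := one_mul _
      _ ≤ r := h
  · refine le_of_forall_pos_le_add fun ε hε => ?_
    obtain ⟨i, hi⟩ := Metric.denseRange_iff.mp hd y (ε / 2) (by positivity)
    have h1 : ‖y‖ - ‖d i‖ ≤ ε / 2 := by
      have h1a : ‖y‖ - ‖d i‖ ≤ ‖y - d i‖ := norm_sub_norm_le _ _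
      have h1b : ‖y - d i‖ = dist y (d i) := (dist_eq_norm _ _).symm
      linarith [hi, h1a, h1b.le, h1b.ge]
    have h2 : ‖d i‖ = ℓ i (d i) := (hℓ2 i).symm
    have h3 : ℓ i (d i) - ℓ i y ≤ ε / 2 := by
      calc ℓ i (d i) - ℓ i y = ℓ i (d i - y) := by rw [map_sub]
        _ ≤ |ℓ i (d i - y)| := le_abs_self _
        _ ≤ ‖ℓ i‖ * ‖d i - y‖ := (ℓ i).le_opNorm _
        _ ≤ 1 * ‖d i - y‖ := mul_le_mul_of_nonneg_right (hℓ1 i) (norm_nonneg _)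
        _ = dist y (d i) := by rw [one_mul, ← dist_eq_norm, dist_comm]
        _ ≤ ε / 2 := hi.le
    have h4 := h i
    linarith

variable (E) in
/-- Cylindrical open "quadrant" sets: finite intersections of open half-spaces. -/
def cylSets : Set (Set E) :=
  {A | ∃ l : List ((E →L[ℝ] ℝ) × ℝ), A = {x | ∀ pc ∈ l, pc.1 x < pc.2}}

lemma isPiSystem_cylSets : IsPiSystem (cylSets E) := by
  rintro A ⟨la, ha⟩ B ⟨lb, hb⟩ -
  refine ⟨la ++ lb, ?_⟩
  subst ha hb
  ext x
  simp only [Set.mem_inter_iff, Set.mem_setOf_eq, List.mem_append]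
  constructor
  · rintro ⟨h1, h2⟩ pc (hpc | hpc)
    exacts [h1 pc hpc, h2 pc hpc]
  · intro h
    exact ⟨fun pc hpc => h pc (Or.inl hpc), fun pc hpc => h pc (Or.inr hpc)⟩

lemma cylSets_measurableSet {A : Set E} (hA : A ∈ cylSets E) : MeasurableSet A := by
  obtain ⟨l, rfl⟩ := hA
  induction l with
  | nil => simpa using MeasurableSet.univ
  | cons a l ih =>
    have h : {x : E | ∀ pc ∈ a :: l, pc.1 x < pc.2} =
        {x : E | a.1 x < a.2} ∩ {x : E | ∀ pc ∈ l, pc.1 x < pc.2} := by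
      ext x; simp [List.forall_mem_cons]
    rw [h]
    exact (measurableSet_lt a.1.continuous.measurable measurable_const).inter ih

lemma borel_eq_cylSets [TopologicalSpace.SeparableSpace E] :
    (inferInstance : MeasurableSpace E) = MeasurableSpace.generateFrom (cylSets E) := by
  refine le_antisymm ?_ (MeasurableSpace.generateFrom_le fun A hA => cylSets_measurableSet hA)
  obtain ⟨ℓ, hℓ⟩ := exists_norming (E := E)
  have hhalf : ∀ (i : ℕ) (c : ℝ),
      MeasurableSet[MeasurableSpace.generateFrom (cylSets E)] {x : E | ℓ i x < c} := by
    intro i c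
    refine MeasurableSpace.measurableSet_generateFrom ⟨[(ℓ i, c)], ?_⟩
    ext x; simp
  have hball : ∀ (a : E) (r : ℝ),
      MeasurableSet[MeasurableSpace.generateFrom (cylSets E)] (Metric.closedBall a r) := by
    intro a r
    have h : Metric.closedBall a r =
        ⋂ (i : ℕ) (q : ℚ) (_ : r < (q : ℝ)), {x : E | ℓ i x < ℓ i a + (q : ℝ)} := by
      ext x
      simp only [Metric.mem_closedBall, Set.mem_iInter, Set.mem_setOf_eq]
      rw [dist_eq_norm]
      constructor
      · intro h' i q hq
        have h1 : ℓ i (x - a) ≤ r := ((hℓ (x - a) r).mp h') i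
        rw [map_sub] at h1
        linarith
      · intro h'
        rw [hℓ (x - a) r]
        intro i
        by_contra hc
        push_neg at hc
        obtain ⟨q, hq1, hq2⟩ := exists_rat_btwn hc
        have := h' i q hq1
        rw [map_sub] at hq2
        linarith
    rw [h]
    exact MeasurableSet.iInter fun i => MeasurableSet.iInter fun q =>
      MeasurableSet.iInter fun _ => hhalf i _
  have : Nonempty E := ⟨0⟩
  set d := TopologicalSpace.denseSeq E with hd_def
  have hd : DenseRange d := TopologicalSpace.denseRange_denseSeq E
  have hopen : ∀ U : Set E, IsOpen U →
      MeasurableSet[MeasurableSpace.generateFrom (cylSets E)] U := by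
    intro U hU
    have hrep : U = ⋃ (i : ℕ) (q : ℚ)
        (_ : 0 < (q : ℝ) ∧ Metric.closedBall (d i) (q : ℝ) ⊆ U),
        Metric.closedBall (d i) (q : ℝ) := by
      ext y
      simp only [Set.mem_iUnion]
      constructor
      · intro hy
        obtain ⟨ε, hε, hballU⟩ := Metric.isOpen_iff.mp hU y hy
        obtain ⟨i, hi⟩ := Metric.denseRange_iff.mp hd y (ε / 3) (by positivity)
        obtain ⟨q, hq1, hq2⟩ := exists_rat_btwn (show ε / 3 < ε / 2 by linarith)
        refine ⟨i, q, ⟨lt_trans (by positivity) hq1, fun z hz => hballU ?_⟩, ?_⟩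
        · have ht : dist z y ≤ dist z (d i) + dist (d i) y := dist_triangle _ _ _
          have h2 : dist (d i) y = dist y (d i) := dist_comm _ _
          simp only [Metric.mem_closedBall] at hz ⊢
          simp only [Metric.mem_ball]
          linarith
        · exact Metric.mem_closedBall.mpr (le_of_lt (lt_of_lt_of_le hi hq1.le))
      · rintro ⟨i, q, ⟨-, hsub⟩, hy⟩
        exact hsub hy
    rw [hrep]
    exact MeasurableSet.iUnion fun i => MeasurableSet.iUnion fun q =>
      MeasurableSet.iUnion fun _ => hball _ _
  rw [BorelSpace.measurable_eq (α := E)]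
  exact MeasurableSpace.generateFrom_le fun U hU => hopen U hU
/-- Smooth cutoff: `cut a b t = 1/2 - arctan (a*t+b)/π`. -/
def cut (a b t : ℝ) : ℝ := 1 / 2 - 1 / Real.pi * Real.arctan (a * t + b)

lemma abs_cut_le (a b t : ℝ) : |cut a b t| ≤ 1 := by
  have hπ := Real.pi_pos
  have h1 : 1 / Real.pi * Real.arctan (a * t + b) ≤ 1 / Real.pi * (Real.pi / 2) :=
    mul_le_mul_of_nonneg_left (Real.arctan_lt_pi_div_two _).le (by positivity)
  have h2 : 1 / Real.pi * (-(Real.pi / 2)) ≤ 1 / Real.pi * Real.arctan (a * t + b) :=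
    mul_le_mul_of_nonneg_left (Real.neg_pi_div_two_lt_arctan _).le (by positivity)
  have h3 : 1 / Real.pi * (Real.pi / 2) = 1 / 2 := by field_simp
  have h4 : 1 / Real.pi * (-(Real.pi / 2)) = -(1 / 2) := by field_simp
  rw [abs_le]
  constructor <;> [skip; skip] <;> simp only [cut] <;> nlinarith

lemma cut_nonneg (a b t : ℝ) : 0 ≤ cut a b t := by
  have hπ := Real.pi_pos
  have h1 : 1 / Real.pi * Real.arctan (a * t + b) ≤ 1 / Real.pi * (Real.pi / 2) :=
    mul_le_mul_of_nonneg_left (Real.arctan_lt_pi_div_two _).le (by positivity)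
  have h3 : 1 / Real.pi * (Real.pi / 2) = 1 / 2 := by field_simp
  simp only [cut]; nlinarith

lemma isC1b_cut (ℓ : E →L[ℝ] ℝ) (c a b : ℝ) :
    IsC1b (fun x => cut a b (ℓ x - c)) := by
  have hπ := Real.pi_pos
  refine ⟨?_, ⟨1, fun x => abs_cut_le _ _ _⟩, ⟨‖a‖ * ‖ℓ‖, fun x => ?_⟩⟩
  · simp only [cut]
    exact contDiff_const.sub (contDiff_const.mul (Real.contDiff_arctan.comp
      ((contDiff_const.mul (ℓ.contDiff.sub contDiff_const)).add contDiff_const)))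
  · have hu : HasFDerivAt (fun y : E => a * (ℓ y - c) + b) (a • (ℓ : E →L[ℝ] ℝ)) x :=
      ((ℓ.hasFDerivAt.sub_const c).const_mul a).add_const b
    have harc : HasFDerivAt (fun y : E => Real.arctan (a * (ℓ y - c) + b))
        ((1 / (1 + (a * (ℓ x - c) + b) ^ 2)) • (a • (ℓ : E →L[ℝ] ℝ))) x :=
      (Real.hasDerivAt_arctan _).comp_hasFDerivAt x hu
    have hfull : HasFDerivAt (fun y : E => cut a b (ℓ y - c))
        (-((1 / Real.pi) • ((1 / (1 + (a * (ℓ x - c) + b) ^ 2)) •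
          (a • (ℓ : E →L[ℝ] ℝ))))) x := by
      simpa [cut] using (harc.const_mul (1 / Real.pi)).const_sub (1 / 2)
    rw [hfull.fderiv, norm_neg, norm_smul, norm_smul, norm_smul]
    have e1 : ‖(1 : ℝ) / Real.pi‖ ≤ 1 := by
      rw [Real.norm_eq_abs, abs_of_pos (by positivity)]
      rw [div_le_one hπ]
      linarith [Real.pi_gt_three]
    have e2 : ‖(1 : ℝ) / (1 + (a * (ℓ x - c) + b) ^ 2)‖ ≤ 1 := by
      rw [Real.norm_eq_abs, abs_of_pos (by positivity)]
      rw [div_le_one (by positivity)]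
      nlinarith [sq_nonneg (a * (ℓ x - c) + b)]
    calc ‖(1:ℝ)/Real.pi‖ * (‖(1:ℝ)/(1 + (a * (ℓ x - c) + b)^2)‖ * (‖a‖ * ‖ℓ‖))
        ≤ 1 * (1 * (‖a‖ * ‖ℓ‖)) := by
          refine mul_le_mul e1 (mul_le_mul e2 le_rfl (by positivity) zero_le_one)
            (by positivity) zero_le_one
      _ = ‖a‖ * ‖ℓ‖ := by ring

lemma tendsto_cut (t : ℝ) :
    Tendsto (fun k : ℕ => cut (((k : ℝ) + 1) ^ 2) ((k : ℝ) + 1) t) atTop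
      (nhds (if t < 0 then 1 else 0)) := by
  have hπ := Real.pi_pos
  have hk : Tendsto (fun k : ℕ => (k : ℝ) + 1) atTop atTop :=
    tendsto_atTop_add_const_right _ 1 tendsto_natCast_atTop_atTop
  by_cases ht : t < 0
  · have heq : (fun k : ℕ => ((k : ℝ) + 1) ^ 2 * t + ((k : ℝ) + 1)) =
        fun k : ℕ => ((k : ℝ) + 1) * (((k : ℝ) + 1) * t + 1) := by
      funext k; ring
    have hinner : Tendsto (fun k : ℕ => ((k : ℝ) + 1) * t + 1) atTop atBot :=
      tendsto_atBot_add_const_right _ 1 (hk.atTop_mul_const_of_neg ht)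
    have harg : Tendsto (fun k : ℕ => ((k : ℝ) + 1) ^ 2 * t + ((k : ℝ) + 1)) atTop atBot := by
      rw [heq]; exact hk.atTop_mul_atBot₀ hinner
    have harctan : Tendsto (fun k : ℕ =>
        Real.arctan (((k : ℝ) + 1) ^ 2 * t + ((k : ℝ) + 1))) atTop
        (nhds (-(Real.pi / 2))) :=
      (Real.tendsto_arctan_atBot.mono_right nhdsWithin_le_nhds).comp harg
    have hval : (if t < 0 then (1 : ℝ) else 0) = 1/2 - 1/Real.pi * (-(Real.pi/2)) := by
      rw [if_pos ht]; field_simp; norm_num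
    rw [hval]
    exact tendsto_const_nhds.sub (tendsto_const_nhds.mul harctan)
  · have harg : Tendsto (fun k : ℕ => ((k : ℝ) + 1) ^ 2 * t + ((k : ℝ) + 1)) atTop atTop := by
      refine tendsto_atTop_mono (fun k => ?_) hk
      push_neg at ht
      nlinarith [sq_nonneg ((k : ℝ) + 1), Nat.cast_nonneg (α := ℝ) k]
    have harctan : Tendsto (fun k : ℕ =>
        Real.arctan (((k : ℝ) + 1) ^ 2 * t + ((k : ℝ) + 1))) atTop
        (nhds (Real.pi / 2)) :=
      (Real.tendsto_arctan_atTop.mono_right nhdsWithin_le_nhds).comp harg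
    have hval : (if t < 0 then (1 : ℝ) else 0) = 1/2 - 1/Real.pi * (Real.pi/2) := by
      rw [if_neg ht]; field_simp; norm_num
    rw [hval]
    exact tendsto_const_nhds.sub (tendsto_const_nhds.mul harctan)

lemma isC1b_list_prod (l : List ((E →L[ℝ] ℝ) × ℝ)) (a b : ℝ) :
    IsC1b (fun x => (l.map (fun pc => cut a b (pc.1 x - pc.2))).prod) := by
  induction l with
  | nil => simp only [List.map_nil, List.prod_nil]; exact isC1b_one
  | cons pc l ih =>
    simp only [List.map_cons, List.prod_cons]
    exact IsC1b.mul (isC1b_cut pc.1 pc.2 a b) ih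

lemma abs_list_prod_cut_le (l : List ((E →L[ℝ] ℝ) × ℝ)) (a b : ℝ) (x : E) :
    |(l.map (fun pc => cut a b (pc.1 x - pc.2))).prod| ≤ 1 := by
  induction l with
  | nil => simp
  | cons pc l ih =>
    simp only [List.map_cons, List.prod_cons, abs_mul]
    calc |cut a b (pc.1 x - pc.2)| * |(l.map (fun pc => cut a b (pc.1 x - pc.2))).prod|
        ≤ 1 * 1 := mul_le_mul (abs_cut_le _ _ _) ih (abs_nonneg _) zero_le_one
      _ = 1 := one_mul 1

lemma tendsto_list_prod_cut (l : List ((E →L[ℝ] ℝ) × ℝ)) (x : E) :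
    Tendsto (fun k : ℕ =>
        (l.map (fun pc => cut (((k : ℝ) + 1) ^ 2) ((k : ℝ) + 1) (pc.1 x - pc.2))).prod)
      atTop (nhds ((l.map (fun pc => if pc.1 x - pc.2 < 0 then (1 : ℝ) else 0)).prod)) := by
  induction l with
  | nil => simpa using tendsto_const_nhds
  | cons pc l ih =>
    simp only [List.map_cons, List.prod_cons]
    exact (tendsto_cut _).mul ih

lemma list_prod_indicator (l : List ((E →L[ℝ] ℝ) × ℝ)) (x : E) :
    (l.map (fun pc => if pc.1 x - pc.2 < 0 then (1 : ℝ) else 0)).prod =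
      Set.indicator {y : E | ∀ pc ∈ l, pc.1 y < pc.2} (fun _ => (1 : ℝ)) x := by
  by_cases hx : ∀ pc ∈ l, pc.1 x < pc.2
  · rw [Set.indicator_of_mem (show x ∈ {y : E | ∀ pc ∈ l, pc.1 y < pc.2} from hx)]
    refine List.prod_eq_one ?_
    intro y hy
    obtain ⟨pc, hpc, rfl⟩ := List.mem_map.mp hy
    rw [if_pos (by linarith [hx pc hpc])]
  · rw [Set.indicator_of_notMem (show x ∉ {y : E | ∀ pc ∈ l, pc.1 y < pc.2} from hx)]
    push_neg at hx
    obtain ⟨pc, hpc, hge⟩ := hx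
    refine List.prod_eq_zero ?_
    exact List.mem_map.mpr ⟨pc, hpc, by rw [if_neg (by linarith)]⟩
end ClosAux
/-- Closability of the directional derivative operator `φ ↦ Dφ(·)(z)` in
`L^p(E,μ)`: if `w ∈ L^{p'}(E,μ)` is an integration-by-parts weight for `(μ,z)`,
`(φ_n) ⊆ C¹_b(E)` tends to `0` in `L^p` and `Dφ_n(·)(z)` tends to `F` in `L^p`, then
`F = 0` μ-a.e. -/
theorem directional_derivative_closable
    {E : Type*} [NormedAddCommGroup E] [NormedSpace ℝ E] [CompleteSpace E]
    [TopologicalSpace.SeparableSpace E] [MeasurableSpace E] [BorelSpace E]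
    (μ : Measure E) [IsProbabilityMeasure μ] (z : E)
    (p : ℝ) (hp : 1 < p)
    (w : E → ℝ) (hw : MemLp w (ENNReal.ofReal (p / (p - 1))) μ)
    (hweight : ∀ φ : E → ℝ, IsC1b φ → ∫ x, fderiv ℝ φ x z ∂μ = ∫ x, φ x * w x ∂μ)
    (φn : ℕ → E → ℝ) (hφn : ∀ n, IsC1b (φn n))
    (hφn0 : Tendsto (fun n => eLpNorm (φn n) (ENNReal.ofReal p) μ) atTop (nhds 0))
    (F : E → ℝ) (hF : MemLp F (ENNReal.ofReal p) μ)
    (hDconv : Tendsto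
      (fun n => eLpNorm (fun x => fderiv ℝ (φn n) x z - F x) (ENNReal.ofReal p) μ)
      atTop (nhds 0)) :
    F =ᵐ[μ] 0 := by
  have hstep1 : ∀ ψ : E → ℝ, IsC1b ψ → ∫ x, ψ x * F x ∂μ = 0 := fun ψ hψ =>
    ClosAux.step1 z hp hw hweight hφn hφn0 hF hDconv hψ
  have h1p : (1 : ENNReal) ≤ ENNReal.ofReal p := by
    rw [show (1 : ENNReal) = ENNReal.ofReal 1 by simp]
    exact ENNReal.ofReal_le_ofReal hp.le
  have hFi : Integrable F μ := memLp_one_iff_integrable.mp (hF.mono_exponent h1p)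
  have htotal : ∫ x, F x ∂μ = 0 := by
    have h := hstep1 _ ClosAux.isC1b_one
    simpa using h
  have hset : ∀ s : Set E, MeasurableSet s → ∫ x in s, F x ∂μ = 0 := by
    intro s hs
    refine MeasurableSpace.induction_on_inter (C := fun A _ => ∫ x in A, F x ∂μ = 0) (ClosAux.borel_eq_cylSets (E := E))
      ClosAux.isPiSystem_cylSets ?_ ?_ ?_ ?_ s hs
    · simp
    · -- basic cylindrical sets
      rintro A ⟨l, rfl⟩
      have hmA : MeasurableSet {x : E | ∀ pc ∈ l, pc.1 x < pc.2} :=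
        ClosAux.cylSets_measurableSet ⟨l, rfl⟩
      set ψk : ℕ → E → ℝ := fun k x =>
        (l.map (fun pc => ClosAux.cut (((k : ℝ) + 1) ^ 2) ((k : ℝ) + 1)
          (pc.1 x - pc.2))).prod with hψk_def
      have hψk : ∀ k, IsC1b (ψk k) := fun k => ClosAux.isC1b_list_prod l _ _
      have hzero : ∀ k, ∫ x, ψk k x * F x ∂μ = 0 := fun k => hstep1 _ (hψk k)
      have hconv : Tendsto (fun k => ∫ x, ψk k x * F x ∂μ) atTop
          (nhds (∫ x, Set.indicator {y : E | ∀ pc ∈ l, pc.1 y < pc.2} F x ∂μ)) := by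
        refine tendsto_integral_of_dominated_convergence (fun x => |F x|)
          (fun k => ((hψk k).1.continuous.aestronglyMeasurable.mul
            hFi.aestronglyMeasurable)) hFi.abs (fun k => ?_) ?_
        · refine Filter.Eventually.of_forall fun x => ?_
          rw [Real.norm_eq_abs, abs_mul]
          calc |ψk k x| * |F x| ≤ 1 * |F x| :=
              mul_le_mul_of_nonneg_right (ClosAux.abs_list_prod_cut_le l _ _ x) (abs_nonneg _)
            _ = |F x| := one_mul _
        · refine Filter.Eventually.of_forall fun x => ?_
          have h1 := (ClosAux.tendsto_list_prod_cut l x).mul_const (F x)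
          rw [ClosAux.list_prod_indicator l x] at h1
          have h2 : Set.indicator {y : E | ∀ pc ∈ l, pc.1 y < pc.2} (fun _ => (1:ℝ)) x * F x
              = Set.indicator {y : E | ∀ pc ∈ l, pc.1 y < pc.2} F x := by
            by_cases hx : x ∈ {y : E | ∀ pc ∈ l, pc.1 y < pc.2}
            · rw [Set.indicator_of_mem hx, Set.indicator_of_mem hx, one_mul]
            · rw [Set.indicator_of_notMem hx, Set.indicator_of_notMem hx, zero_mul]
          rw [h2] at h1
          exact h1
      have h3 : (0 : ℝ) = ∫ x, Set.indicator {y : E | ∀ pc ∈ l, pc.1 y < pc.2} F x ∂μ := by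
        refine tendsto_nhds_unique ?_ hconv
        simpa [hzero] using (tendsto_const_nhds :
          Tendsto (fun _ : ℕ => (0 : ℝ)) atTop (nhds 0))
      rw [← integral_indicator hmA]
      exact h3.symm
    · -- complement
      intro t ht h0
      have h := integral_add_compl ht hFi
      rw [h0, htotal] at h
      linarith
    · -- disjoint unions
      intro f hdisj hmeas h0
      rw [integral_iUnion hmeas hdisj hFi.integrableOn]
      simp [h0]
  exact ae_eq_zero_of_forall_setIntegral_eq_of_sigmaFinite
    (fun s _ _ => hFi.integrableOn) (fun s hs _ => hset s hs)
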